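/- For every real number x with 0 < x < 1, the strict inequality arcsin x < φ(x) holds, where φ(x) = (π(2 − √2)/(π − 2√2))·(√(1 + x) − √(1 − x)) / (√2(4 − π)/(π − 2√2) + √(1 + x) + √(1 − x)). -/

import Mathlib

open Real Set

/-- The upper bound `φ` for `arcsin` obtained by the λ-method of Mitrinović–Vasić. -/
noncomputable def phiBound (x : ℝ) : ℝ :=
  (Real.pi * (2 - Real.sqrt 2) / (Real.pi - 2 * Real.sqrt 2)) *
      (Real.sqrt (1 + x) - Real.sqrt (1 - x)) /
    (Real.sqrt 2 * (4 - Real.pi) / (Real.pi - 2 * Real.sqrt 2) +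
      Real.sqrt (1 + x) + Real.sqrt (1 - x))

lemma key_pos (A B : ℝ) (hAB : A - 2 = B) (hB8 : B < 8)
    (hgc : A * Real.sin (π/4) - B * (π/4) - 2 * (π/4) * Real.cos (π/4) = 0)
    (t : ℝ) (ht0 : 0 < t) (htc : t < π/4) :
    0 < A * Real.sin t - B * t - 2 * t * Real.cos t := by
  have hπ : 0 < π := Real.pi_pos
  have hcpos : 0 < π/4 := by positivity
  set g : ℝ → ℝ := fun u => A * Real.sin u - B * u - 2 * u * Real.cos u with hgdef
  set k : ℝ → ℝ := fun u => 2 * u * Real.cos (u/2) - B * Real.sin (u/2) with hkdef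
  -- derivative facts
  have hsinhalf : ∀ u : ℝ, HasDerivAt (fun v : ℝ => Real.sin (v/2)) (Real.cos (u/2) * (1/2)) u :=
    fun u => by have := (Real.hasDerivAt_sin (u/2)).comp u ((hasDerivAt_id u).div_const 2); exact this
  have hcoshalf : ∀ u : ℝ, HasDerivAt (fun v : ℝ => Real.cos (v/2)) (-Real.sin (u/2) * (1/2)) u :=
    fun u => by have := (Real.hasDerivAt_cos (u/2)).comp u ((hasDerivAt_id u).div_const 2); exact this
  have hgder : ∀ u : ℝ, HasDerivAt g (A * Real.cos u - B * 1 -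
      (2 * 1 * Real.cos u + 2 * u * -Real.sin u)) u := by
    intro u
    exact (((Real.hasDerivAt_sin u).const_mul A).sub ((hasDerivAt_id u).const_mul B)).sub
      (((hasDerivAt_id u).const_mul 2).mul (Real.hasDerivAt_cos u))
  have hderivg : ∀ u : ℝ, deriv g u = 2 * Real.sin (u/2) * k u := by
    intro u
    rw [(hgder u).deriv]
    have h1 : Real.sin (2 * (u/2)) = 2 * Real.sin (u/2) * Real.cos (u/2) := Real.sin_two_mul _
    have h2 : Real.cos (2 * (u/2)) = 2 * Real.cos (u/2)^2 - 1 := Real.cos_two_mul _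
    have e : 2 * (u/2) = u := by ring
    rw [e] at h1 h2
    have p : Real.sin (u/2)^2 + Real.cos (u/2)^2 = 1 := Real.sin_sq_add_cos_sq _
    simp only [hkdef]
    linear_combination (2*u) * h1 + B * h2 + (2*B) * p + Real.cos u * hAB
  have hkder : ∀ u : ℝ, HasDerivAt k
      (2 * 1 * Real.cos (u/2) + 2 * u * (-Real.sin (u/2) * (1/2)) - B * (Real.cos (u/2) * (1/2))) u := by
    intro u
    exact ((((hasDerivAt_id u).const_mul 2).mul (hcoshalf u)).sub ((hsinhalf u).const_mul B))
  have hderivk : deriv k = fun u => 2 * Real.cos (u/2) - u * Real.sin (u/2) - B/2 * Real.cos (u/2) := by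
    funext u
    rw [(hkder u).deriv]; ring
  have hkder2 : ∀ u : ℝ, HasDerivAt (deriv k)
      (2 * (-Real.sin (u/2) * (1/2)) - (1 * Real.sin (u/2) + u * (Real.cos (u/2) * (1/2)))
        - B/2 * (-Real.sin (u/2) * (1/2))) u := by
    intro u
    rw [hderivk]
    exact (((hcoshalf u).const_mul 2).sub (((hasDerivAt_id u).mul (hsinhalf u)))).sub
      ((hcoshalf u).const_mul (B/2))
  have hkcont : Continuous k := by fun_prop
  have hgcont : Continuous g := by fun_prop
  -- strict concavity of k on [0, π/4]
  have hconc : StrictConcaveOn ℝ (Icc 0 (π/4)) k := by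
    apply strictConcaveOn_of_deriv2_neg (convex_Icc _ _) hkcont.continuousOn
    intro u hu
    rw [interior_Icc] at hu
    have hs : 0 < Real.sin (u/2) := by
      apply Real.sin_pos_of_pos_of_lt_pi (by linarith [hu.1]) (by nlinarith [hu.2, hπ])
    have hc : 0 < Real.cos (u/2) := by
      apply Real.cos_pos_of_mem_Ioo
      constructor <;> nlinarith [hu.1, hu.2, hπ]
    have : deriv (deriv k) u = (B/4 - 2) * Real.sin (u/2) - u/2 * Real.cos (u/2) :=
      by rw [(hkder2 u).deriv]; ring
    show deriv^[2] k u < 0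
    simp only [Function.iterate_succ, Function.iterate_zero, Function.comp_apply, id_eq]
    rw [this]
    nlinarith [hu.1, hu.2, mul_pos hs hc]
  have hk0 : k 0 = 0 := by simp [hkdef]
  have hg0 : g 0 = 0 := by simp [hgdef]
  have hgc' : g (π/4) = 0 := by simpa [hgdef] using hgc
  -- case split on sign of k t
  rcases lt_or_ge 0 (k t) with hkt | hkt
  · -- k t > 0 : k > 0 on (0,t), g strictly increasing on [0,t]
    have hkpos : ∀ s ∈ Ioo (0:ℝ) t, 0 < k s := by
      intro s hs
      have h0mem : (0:ℝ) ∈ Icc (0:ℝ) (π/4) := ⟨le_refl _, le_of_lt hcpos⟩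
      have htmem : t ∈ Icc (0:ℝ) (π/4) := ⟨le_of_lt ht0, le_of_lt htc⟩
      have ha : 0 < (t - s)/t := by
        apply div_pos (by linarith [hs.2]) ht0
      have hb : 0 < s/t := div_pos hs.1 ht0
      have hab : (t - s)/t + s/t = 1 := by field_simp; ring
      have := hconc.2 h0mem htmem (by exact fun h => absurd h.symm (ne_of_gt ht0))
        ha hb hab
      have he : ((t - s)/t) • (0:ℝ) + (s/t) • t = s := by
        simp [smul_eq_mul]; field_simp
      rw [he, hk0] at this
      simp only [smul_eq_mul, mul_zero, zero_add] at this
      exact lt_trans (mul_pos hb hkt) this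
    have hmono : StrictMonoOn g (Icc 0 t) := by
      apply strictMonoOn_of_deriv_pos (convex_Icc _ _) hgcont.continuousOn
      intro s hs
      rw [interior_Icc] at hs
      rw [hderivg s]
      have hssin : 0 < Real.sin (s/2) := by
        apply Real.sin_pos_of_pos_of_lt_pi (by linarith [hs.1]) (by nlinarith [hs.2, hπ, htc])
      exact mul_pos (mul_pos two_pos hssin) (hkpos s hs)
    have := hmono ⟨le_refl _, le_of_lt ht0⟩ ⟨le_of_lt ht0, le_refl _⟩ ht0
    rw [hg0] at this
    simpa [hgdef] using this
  · -- k t ≤ 0 : k < 0 on (t, π/4), g strictly decreasing on [t, π/4]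
    have hkneg : ∀ s ∈ Ioo t (π/4), k s < 0 := by
      intro s hs
      have h0mem : (0:ℝ) ∈ Icc (0:ℝ) (π/4) := ⟨le_refl _, le_of_lt hcpos⟩
      have hs0 : 0 < s := lt_trans ht0 hs.1
      have hsmem : s ∈ Icc (0:ℝ) (π/4) := ⟨le_of_lt hs0, le_of_lt hs.2⟩
      have ha : 0 < (s - t)/s := div_pos (by linarith [hs.1]) hs0
      have hb : 0 < t/s := div_pos ht0 hs0
      have hab : (s - t)/s + t/s = 1 := by field_simp; ring
      have := hconc.2 h0mem hsmem (by exact fun h => absurd h.symm (ne_of_gt hs0)) ha hb hab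
      have he : ((s - t)/s) • (0:ℝ) + (t/s) • s = t := by
        simp [smul_eq_mul]; field_simp
      rw [he, hk0] at this
      simp only [smul_eq_mul, mul_zero, zero_add] at this
      -- (t/s) * k s < k t ≤ 0
      by_contra hcon
      push_neg at hcon
      exact absurd (lt_of_le_of_lt (mul_nonneg hb.le hcon) (lt_of_lt_of_le this hkt))
        (lt_irrefl 0)
    have hanti : StrictAntiOn g (Icc t (π/4)) := by
      apply strictAntiOn_of_deriv_neg (convex_Icc _ _) hgcont.continuousOn
      intro s hs
      rw [interior_Icc] at hs
      rw [hderivg s]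
      have hssin : 0 < Real.sin (s/2) := by
        apply Real.sin_pos_of_pos_of_lt_pi (by linarith [hs.1, ht0]) (by nlinarith [hs.2, hπ])
      have h2 : 0 < 2 * Real.sin (s/2) := by linarith
      exact mul_neg_of_pos_of_neg h2 (hkneg s hs)
    have := hanti ⟨le_refl _, le_of_lt htc⟩ ⟨le_of_lt htc, le_refl _⟩ htc
    rw [hgc'] at this
    simpa [hgdef] using this

set_option maxHeartbeats 1000000 in
theorem arcsin_lt_phiBound (x : ℝ) (hx : 0 < x) (hx' : x < 1) :
    Real.arcsin x < phiBound x := by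
  have hπ : 0 < π := Real.pi_pos
  have hπlt : π < 3.1416 := by linarith [Real.pi_lt_d6]
  have hπgt : (3.1415:ℝ) < π := by linarith [Real.pi_gt_d6]
  have hs2 : Real.sqrt 2 ^ 2 = 2 := Real.sq_sqrt (by norm_num)
  have hs2pos : 0 < Real.sqrt 2 := Real.sqrt_pos.mpr (by norm_num)
  have hs2lt : Real.sqrt 2 < 1.415 := by nlinarith
  have hs2gt : (1.414:ℝ) < Real.sqrt 2 := by nlinarith
  have hD : 0 < π - 2 * Real.sqrt 2 := by nlinarith
  set A : ℝ := π * (2 - Real.sqrt 2) / (π - 2 * Real.sqrt 2) with hAdef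
  set B : ℝ := Real.sqrt 2 * (4 - π) / (π - 2 * Real.sqrt 2) with hBdef
  have hAB : A - 2 = B := by
    rw [hAdef, hBdef]; field_simp; ring
  have hB8 : B < 8 := by
    rw [hBdef, div_lt_iff₀ hD]; nlinarith
  have hBpos : 0 < B := by
    rw [hBdef]; apply div_pos (by nlinarith) hD
  have hgc : A * Real.sin (π/4) - B * (π/4) - 2 * (π/4) * Real.cos (π/4) = 0 := by
    rw [Real.sin_pi_div_four, Real.cos_pi_div_four, hAdef, hBdef]
    field_simp
    nlinarith [hs2]
  -- the substitution
  set θ : ℝ := Real.arcsin x with hθdef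
  have hθ0 : 0 < θ := Real.arcsin_pos.mpr hx
  have hθπ : θ < π/2 := Real.arcsin_lt_pi_div_two.mpr hx'
  set t : ℝ := θ/2 with htdef
  have ht0 : 0 < t := by positivity
  have htc : t < π/4 := by rw [htdef]; linarith
  have hsinθ : Real.sin θ = x := Real.sin_arcsin (by linarith) (le_of_lt hx')
  have h2t : 2 * t = θ := by rw [htdef]; ring
  have hsin2 : Real.sin θ = 2 * Real.sin t * Real.cos t := by
    rw [← h2t, Real.sin_two_mul]
  have hpyth : Real.sin t ^ 2 + Real.cos t ^ 2 = 1 := Real.sin_sq_add_cos_sq t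
  have hsint : 0 < Real.sin t :=
    Real.sin_pos_of_pos_of_lt_pi ht0 (by linarith)
  have hcost : Real.sin t < Real.cos t := by
    have h1 : Real.sin t < Real.sin (π/4) := by
      apply Real.strictMonoOn_sin ⟨by linarith, by linarith⟩ ⟨by linarith, by linarith⟩ htc
    have h2 : Real.cos (π/4) < Real.cos t := by
      apply Real.strictAntiOn_cos ⟨by linarith, by linarith⟩ ⟨by linarith, by linarith⟩ htc
    rw [Real.sin_pi_div_four] at h1
    rw [Real.cos_pi_div_four] at h2
    linarith
  have hsq1 : Real.sqrt (1 + x) = Real.cos t + Real.sin t := by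
    rw [show (1:ℝ) + x = (Real.cos t + Real.sin t)^2 by
      rw [← hsinθ, hsin2]; nlinarith [hpyth]]
    exact Real.sqrt_sq (by linarith)
  have hsq2 : Real.sqrt (1 - x) = Real.cos t - Real.sin t := by
    rw [show (1:ℝ) - x = (Real.cos t - Real.sin t)^2 by
      rw [← hsinθ, hsin2]; nlinarith [hpyth]]
    exact Real.sqrt_sq (by linarith)
  have hkey := key_pos A B hAB hB8 hgc t ht0 htc
  have hcost0 : 0 < Real.cos t := lt_trans hsint hcost
  unfold phiBound
  rw [hsq1, hsq2, ← hAdef, ← hBdef]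
  have hden : 0 < B + (Real.cos t + Real.sin t) + (Real.cos t - Real.sin t) := by
    nlinarith
  rw [lt_div_iff₀ hden, ← h2t]
  nlinarith [hkey]
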